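/- Fix integers r ≥ 1 and m* ≥ r. For each n, let p_n > m* be an integer and let Ŵ⁽ⁿ⁾ be a random p_n × p_n real symmetric positive semidefinite matrix whose entrywise expectation W⁽ⁿ⁾ = E[Ŵ⁽ⁿ⁾] is symmetric positive semidefinite of rank r. Write λ̂₁⁽ⁿ⁾ ≥ … ≥ λ̂_{p_n}⁽ⁿ⁾ for the eigenvalues of Ŵ⁽ⁿ⁾ and λ₁⁽ⁿ⁾ ≥ … ≥ λ_r⁽ⁿ⁾ > 0 = λ_{r+1}⁽ⁿ⁾ = … = λ_{p_n}⁽ⁿ⁾ for those of W⁽ⁿ⁾, and assume λ_r⁽ⁿ⁾ → ∞ as n → ∞. Let γ_n > 0 and β_n > 0 be deterministic sequences such that: (a) for every ε > 0 there exists M > 0 with limsup_n P(|λ̂₁⁽ⁿ⁾ − λ₁⁽ⁿ⁾| > ε·λ₁⁽ⁿ⁾ + M·γ_n) ≤ ε and limsup_n P(|λ̂_r⁽ⁿ⁾ − λ_r⁽ⁿ⁾| > ε·λ_r⁽ⁿ⁾ + M·γ_n) ≤ ε; (b) for every ε > 0 there exists M > 0 with limsup_n P(λ̂_{r+1}⁽ⁿ⁾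 > M·β_n) ≤ ε. Let g_n > 0 be a deterministic penalty sequence satisfying (g_n + γ_n)/λ_r⁽ⁿ⁾ → 0 and g_n/β_n → ∞. Then P( m = r is the unique minimizer over m ∈ {0,1,…,m*} of Σ_{j=m+1}^{p_n} λ̂_j⁽ⁿ⁾ + m·g_n ) → 1 as n → ∞. -/

import Mathlib

open MeasureTheory Filter Matrix

/-- consistency of the information-criterion rank estimator,
Proposition 1(i): with sample eigenvalues λ̂⁽ⁿ⁾ (in decreasing order) of the random
p_n × p_n symmetric psd matrix Ŵ⁽ⁿ⁾, whose entrywise expectation W⁽ⁿ⁾ is symmetric psd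
of rank r with decreasingly ordered eigenvalues λ⁽ⁿ⁾ satisfying λ_r⁽ⁿ⁾ → ∞, under the
ε–M limsup tail conditions on the eigenvalue estimation errors with rates γ_n, β_n and
a penalty g_n > 0 with (g_n + γ_n)/λ_r⁽ⁿ⁾ → 0 and g_n/β_n → ∞, the probability that
m = r uniquely minimizes IC(m) = Σ_{j=m+1}^{p_n} λ̂_j⁽ⁿ⁾ + m·g_n over m ∈ {0,…,m*}
tends to 1.  (Eigenvalues are 0-indexed: `lam n ⟨k-1,_⟩` is the k-th largest; the tail
sum Σ_{j=m+1}^{p_n} λ̂_j is the sum over 0-based indices j with m ≤ j.) -/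

private lemma strictOnAux (f : ℕ → ℝ) (c d : ℕ)
    (h : ∀ m, c ≤ m → m + 1 ≤ d → f m < f (m + 1)) :
    ∀ a b, c ≤ a → a < b → b ≤ d → f a < f b := by
  intro a b hca hab hbd
  induction b with
  | zero => omega
  | succ b ih =>
    rcases Nat.lt_or_ge a b with h' | h'
    · exact (ih h' (by omega)).trans (h b (by omega) hbd)
    · have hab' : a = b := by omega
      subst hab'
      exact h a hca hbd

private lemma ic_key {q : ℕ} (r mstar : ℕ) (hr : 1 ≤ r) (hrm : r ≤ mstar) (hq : mstar < q)
    (lh : Fin q → ℝ) (hanti : Antitone lh) (g : ℝ)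
    (h1 : g < lh ⟨r - 1, by omega⟩) (h2 : lh ⟨r, by omega⟩ < g) :
    ∀ m, m ≤ mstar → m ≠ r →
      (∑ j ∈ Finset.univ.filter (fun j : Fin q => r ≤ (j : ℕ)), lh j) + (r : ℝ) * g <
      (∑ j ∈ Finset.univ.filter (fun j : Fin q => m ≤ (j : ℕ)), lh j) + (m : ℝ) * g := by
  set S : ℕ → ℝ := fun m => ∑ j ∈ Finset.univ.filter (fun j : Fin q => m ≤ (j : ℕ)), lh j
    with hSdef
  have hS : ∀ m, (hm : m < q) → S m = lh ⟨m, hm⟩ + S (m + 1) := by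
    intro m hm
    have hins : Finset.univ.filter (fun j : Fin q => m ≤ (j : ℕ)) =
        insert (⟨m, hm⟩ : Fin q) (Finset.univ.filter (fun j : Fin q => m + 1 ≤ (j : ℕ))) := by
      ext j
      simp only [Finset.mem_filter, Finset.mem_insert, Finset.mem_univ, true_and, Fin.ext_iff]
      omega
    simp only [hSdef, hins]
    rw [Finset.sum_insert (by simp)]
  set f : ℕ → ℝ := fun m => S m + m * g with hfdef
  have hstep_lt : ∀ m, m < r → f (m + 1) < f m := by
    intro m hm
    have hmq : m < q := by omega
    have hle : lh ⟨r - 1, by omega⟩ ≤ lh ⟨m, hmq⟩ :=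
      hanti (by simp only [Fin.mk_le_mk]; omega)
    simp only [hfdef, hS m hmq]
    push_cast
    nlinarith
  have hstep_gt : ∀ m, r ≤ m → m + 1 ≤ q → f m < f (m + 1) := by
    intro m hm hmq
    have hmq' : m < q := by omega
    have hle : lh ⟨m, hmq'⟩ ≤ lh ⟨r, by omega⟩ :=
      hanti (by simp only [Fin.mk_le_mk]; omega)
    simp only [hfdef, hS m hmq']
    push_cast
    nlinarith
  intro m hm hne
  show f r < f m
  rcases Nat.lt_or_ge m r with hmr | hmr
  · have := strictOnAux (fun k => -(f k)) 0 r
      (fun k _ hk => by simpa using hstep_lt k (by omega)) m r (by omega) hmr le_rfl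
    simpa using this
  · have hmr' : r < m := by omega
    exact strictOnAux f r q (fun k hk hk' => hstep_gt k hk hk') r m le_rfl (by omega) (by omega)

private lemma limsup_small_tendsto (u : ℕ → ENNReal)
    (h : ∀ ε : ℝ, 0 < ε → Filter.limsup u Filter.atTop ≤ ENNReal.ofReal ε) :
    Filter.Tendsto u Filter.atTop (nhds 0) := by
  refine tendsto_of_le_liminf_of_limsup_le zero_le ?_
  refine ENNReal.le_of_forall_pos_le_add fun ε hε _ => ?_
  rw [zero_add]
  calc Filter.limsup u Filter.atTop ≤ ENNReal.ofReal ε := h ε (by exact_mod_cast hε)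
    _ = ε := ENNReal.ofReal_coe_nnreal

private lemma sandwich_prob {Ω : Type*} [MeasurableSpace Ω] (P : MeasureTheory.Measure Ω)
    [MeasureTheory.IsProbabilityMeasure P] (A B T : ℕ → Set Ω)
    (hA : Filter.Tendsto (fun n => P (A n)) Filter.atTop (nhds 0))
    (hB : Filter.Tendsto (fun n => P (B n)) Filter.atTop (nhds 0))
    (hG : ∀ n, (A n ∪ B n)ᶜ ⊆ T n) :
    Filter.Tendsto (fun n => P (T n)) Filter.atTop (nhds 1) := by
  have hlb : ∀ n, 1 - (P (A n) + P (B n)) ≤ P (T n) := by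
    intro n
    rw [tsub_le_iff_right]
    have h1 : (1 : ENNReal) = P (T n ∪ (T n)ᶜ) := by
      rw [Set.union_compl_self, MeasureTheory.measure_univ]
    have h2 : P ((T n)ᶜ) ≤ P (A n) + P (B n) := by
      refine le_trans (MeasureTheory.measure_mono ?_) (MeasureTheory.measure_union_le _ _)
      rw [← Set.compl_subset_compl] at *
      simpa using hG n
    calc (1 : ENNReal) = P (T n ∪ (T n)ᶜ) := h1
      _ ≤ P (T n) + P ((T n)ᶜ) := MeasureTheory.measure_union_le _ _
      _ ≤ P (T n) + (P (A n) + P (B n)) := by gcongr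
  have hlow : Filter.Tendsto (fun n => 1 - (P (A n) + P (B n))) Filter.atTop (nhds 1) := by
    have := ENNReal.Tendsto.sub (tendsto_const_nhds (x := (1 : ENNReal)))
      (hA.add hB) (Or.inl ENNReal.one_ne_top)
    simpa using this
  exact tendsto_of_tendsto_of_tendsto_of_le_of_le hlow tendsto_const_nhds hlb
    (fun n => MeasureTheory.prob_le_one)

theorem stmt0
    (r mstar : ℕ) (hr : 1 ≤ r) (hrm : r ≤ mstar)
    (p : ℕ → ℕ) (hp : ∀ n, mstar < p n)
    {Ω : Type*} [MeasurableSpace Ω] (P : Measure Ω) [IsProbabilityMeasure P]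
    (What : (n : ℕ) → Ω → Matrix (Fin (p n)) (Fin (p n)) ℝ)
    (hmeas : ∀ n (i j : Fin (p n)), Measurable fun ω => What n ω i j)
    (hWhatpsd : ∀ n ω, (What n ω).PosSemidef)
    (W : (n : ℕ) → Matrix (Fin (p n)) (Fin (p n)) ℝ)
    (hWE : ∀ n (i j : Fin (p n)), W n i j = ∫ ω, What n ω i j ∂P)
    (hWpsd : ∀ n, (W n).PosSemidef)
    (hWrank : ∀ n, (W n).rank = r)
    -- λ̂ n ω : the eigenvalues of Ŵ⁽ⁿ⁾(ω), listed in decreasing order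
    (lamhat : (n : ℕ) → Ω → Fin (p n) → ℝ)
    (hlamhat_anti : ∀ n ω, Antitone (lamhat n ω))
    (hlamhat_eig : ∀ n ω, ∃ σ : Equiv.Perm (Fin (p n)),
        lamhat n ω = (hWhatpsd n ω).isHermitian.eigenvalues ∘ σ)
    -- λ n : the eigenvalues of W⁽ⁿ⁾, listed in decreasing order; the top r are
    -- positive and the remaining p_n − r are zero
    (lam : (n : ℕ) → Fin (p n) → ℝ)
    (hlam_anti : ∀ n, Antitone (lam n))
    (hlam_eig : ∀ n, ∃ σ : Equiv.Perm (Fin (p n)),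
        lam n = (hWpsd n).isHermitian.eigenvalues ∘ σ)
    (hlam_pos : ∀ n (j : Fin (p n)), (j : ℕ) < r → 0 < lam n j)
    (hlam_zero : ∀ n (j : Fin (p n)), r ≤ (j : ℕ) → lam n j = 0)
    (hlam_r : Tendsto (fun n => lam n ⟨r - 1, by have := hp n; omega⟩) atTop atTop)
    (γ β : ℕ → ℝ) (hγ : ∀ n, 0 < γ n) (hβ : ∀ n, 0 < β n)
    -- condition (a): |λ̂₁ − λ₁| = o_P(λ₁) + O_P(γ_n) and |λ̂_r − λ_r| = o_P(λ_r) + O_P(γ_n)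
    (ha1 : ∀ ε : ℝ, 0 < ε → ∃ M : ℝ, 0 < M ∧
        limsup (fun n => P {ω |
            ε * lam n ⟨0, by have := hp n; omega⟩ + M * γ n <
              |lamhat n ω ⟨0, by have := hp n; omega⟩ -
                lam n ⟨0, by have := hp n; omega⟩|}) atTop ≤ ENNReal.ofReal ε)
    (ha2 : ∀ ε : ℝ, 0 < ε → ∃ M : ℝ, 0 < M ∧
        limsup (fun n => P {ω |
            ε * lam n ⟨r - 1, by have := hp n; omega⟩ + M * γ n <
              |lamhat n ω ⟨r - 1, by have := hp n; omega⟩ -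
                lam n ⟨r - 1, by have := hp n; omega⟩|}) atTop ≤ ENNReal.ofReal ε)
    -- condition (b): λ̂_{r+1} = O_P(β_n)
    (hb : ∀ ε : ℝ, 0 < ε → ∃ M : ℝ, 0 < M ∧
        limsup (fun n => P {ω |
            M * β n < lamhat n ω ⟨r, by have := hp n; omega⟩}) atTop ≤ ENNReal.ofReal ε)
    -- the penalty sequence
    (g : ℕ → ℝ) (hgpos : ∀ n, 0 < g n)
    (hg1 : Tendsto (fun n => (g n + γ n) / lam n ⟨r - 1, by have := hp n; omega⟩)
      atTop (nhds 0))
    (hg2 : Tendsto (fun n => g n / β n) atTop atTop) :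
    Tendsto (fun n => P {ω | ∀ m, m ≤ mstar → m ≠ r →
        (∑ j ∈ Finset.univ.filter (fun j : Fin (p n) => r ≤ (j : ℕ)), lamhat n ω j)
            + (r : ℝ) * g n <
          (∑ j ∈ Finset.univ.filter (fun j : Fin (p n) => m ≤ (j : ℕ)), lamhat n ω j)
            + (m : ℝ) * g n}) atTop (nhds 1) := by
  
  have hidx1 : ∀ n, r - 1 < p n := fun n => by have := hp n; omega
  have hidx2 : ∀ n, r < p n := fun n => by have := hp n; omega
  have hΛpos : ∀ n, 0 < lam n ⟨r - 1, hidx1 n⟩ := fun n => hlam_pos n _ (by simp only [Fin.val_mk]; omega)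
  set A : ℕ → Set Ω := fun n => {ω | lamhat n ω ⟨r - 1, hidx1 n⟩ ≤ g n} with hAdef
  set B : ℕ → Set Ω := fun n => {ω | g n ≤ lamhat n ω ⟨r, hidx2 n⟩} with hBdef
  have hA : Tendsto (fun n => P (A n)) atTop (nhds 0) := by
    apply limsup_small_tendsto
    intro ε hε
    obtain ⟨M, hM, hlim⟩ := ha2 (min ε (1/2)) (by positivity)
    refine le_trans (limsup_le_limsup ?_)
      (le_trans hlim (ENNReal.ofReal_le_ofReal (min_le_left _ _)))
    filter_upwards [hg1.eventually_lt_const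
      (show (0:ℝ) < min (1/4) (1/(4*M)) by positivity)] with n hn
    apply measure_mono
    intro ω hω
    simp only [hAdef, Set.mem_setOf_eq] at hω ⊢
    by_contra hcon
    push_neg at hcon
    have hΛ := hΛpos n
    have h1 : (g n + γ n) / lam n ⟨r - 1, hidx1 n⟩ < 1/4 :=
      lt_of_lt_of_le hn (min_le_left _ _)
    have h2 : (g n + γ n) / lam n ⟨r - 1, hidx1 n⟩ < 1/(4*M) :=
      lt_of_lt_of_le hn (min_le_right _ _)
    rw [div_lt_iff₀ hΛ] at h1 h2
    have hMγ : M * (g n + γ n) < lam n ⟨r - 1, hidx1 n⟩ / 4 := by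
      calc M * (g n + γ n) < M * (1/(4*M) * lam n ⟨r - 1, hidx1 n⟩) := by
            exact mul_lt_mul_of_pos_left h2 hM
        _ = lam n ⟨r - 1, hidx1 n⟩ / 4 := by field_simp
    have habs : lam n ⟨r - 1, hidx1 n⟩ - lamhat n ω ⟨r - 1, hidx1 n⟩ ≤
        |lamhat n ω ⟨r - 1, hidx1 n⟩ - lam n ⟨r - 1, hidx1 n⟩| := by
      rw [abs_sub_comm]
      exact le_abs_self _
    have hmin : min ε (1/2) ≤ 1/2 := min_le_right _ _
    have hγn := hγ n
    have hgn := hgpos n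
    nlinarith
  have hB : Tendsto (fun n => P (B n)) atTop (nhds 0) := by
    apply limsup_small_tendsto
    intro ε hε
    obtain ⟨M, hM, hlim⟩ := hb ε hε
    refine le_trans (limsup_le_limsup ?_) hlim
    filter_upwards [hg2.eventually_gt_atTop M] with n hn
    apply measure_mono
    intro ω hω
    simp only [hBdef, Set.mem_setOf_eq] at hω ⊢
    have : M * β n < g n := (lt_div_iff₀ (hβ n)).mp hn
    linarith
  apply sandwich_prob P A B _ hA hB
  intro n ω hω
  simp only [hAdef, hBdef, Set.mem_compl_iff, Set.mem_union, Set.mem_setOf_eq, not_or,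
    not_le] at hω
  intro m hm hne
  exact ic_key r mstar hr hrm (hp n) (lamhat n ω) (hlamhat_anti n ω) (g n)
    hω.1 hω.2 m hm hne
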